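/- Let k ≥ 3 and let Φ = (φ_1,…,φ_k) : ℂ^k → ℂ^k be an additive surjection that preserves mutual strong Birkhoff–James orthogonality in one direction. Then there exist a positive real γ, a unitary u ∈ ℂ^k (i.e., |u_i| = 1 for all i), and a subset J ⊆ {1,…,k} such that φ_i(λ) = γ · u_i · λ for i ∈ J and φ_i(λ) = γ · u_i · conj(λ) for i ∉ J, for all λ ∈ ℂ. -/

import Mathlib

/-- `a` is strongly Birkhoff–James orthogonal to `b`. -/
def StrongBJ {𝔄 : Type*} [NormedRing 𝔄] (a b : 𝔄) : Prop :=
  ∀ c : 𝔄, ‖a‖ ≤ ‖a + b * c‖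

/-- `a` and `b` are mutually strongly Birkhoff–James orthogonal. -/
def MutualBJ {𝔄 : Type*} [NormedRing 𝔄] (a b : 𝔄) : Prop :=
  StrongBJ a b ∧ StrongBJ b a


lemma squeeze_rat (a r g : ℝ) (ha : 0 ≤ a) (hg : 0 ≤ g) (hr : 0 ≤ r)
    (hup : ∀ q : ℚ, r ≤ (q:ℝ) → a ≤ g * q)
    (hlo : ∀ q : ℚ, 0 ≤ (q:ℝ) → (q:ℝ) ≤ r → g * q ≤ a) : a = g * r := by
  apply le_antisymm
  · by_contra hc
    push_neg at hc
    obtain ⟨q, hq1, hq2⟩ := exists_rat_btwn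
      (show r < r + (a - g*r)/(g+1) by
        have : 0 < (a - g*r)/(g+1) := div_pos (by linarith) (by linarith)
        linarith)
    have h1 := hup q hq1.le
    have h3 : ((q:ℝ) - r) * (g+1) < a - g*r := by
      have := (lt_div_iff₀ (show (0:ℝ) < g + 1 by linarith)).1 (by linarith : (q:ℝ) - r < (a - g*r)/(g+1))
      linarith
    nlinarith
  · by_contra hc
    push_neg at hc
    have hg0 : 0 < g := by
      by_contra h
      push_neg at h
      have := mul_nonpos_of_nonpos_of_nonneg h hr
      linarith
    have hdl : a / g < r := (div_lt_iff₀ hg0).2 (by linarith [mul_comm g r])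
    obtain ⟨q, hq1, hq2⟩ := exists_rat_btwn hdl
    have hq0 : 0 ≤ (q:ℝ) := le_trans (div_nonneg ha hg0.le) hq1.le
    have h1 := hlo q hq0 hq2.le
    have h2 : a < g * q := by
      have := (div_lt_iff₀ hg0).1 hq1
      linarith [mul_comm (q:ℝ) g]
    linarith

lemma wchar (w : ℂ) (h1 : ‖w‖ = 1) (h0 : w.re = 0) :
    w = Complex.I ∨ w = -Complex.I := by
  have hsq : w.re^2 + w.im^2 = 1 := by
    have := Complex.sq_norm w
    rw [h1, Complex.normSq_apply] at this
    nlinarith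
  rw [h0] at hsq
  have h2 : (w.im - 1) * (w.im + 1) = 0 := by nlinarith
  rcases mul_eq_zero.1 h2 with h|h
  · left
    apply Complex.ext
    · simp [h0]
    · simp; linarith
  · right
    apply Complex.ext
    · simp [h0]
    · simp; linarith

lemma perp_char (a b : ℂ) (ha : a ≠ 0) (hre : (a * (starRingEnd ℂ) b).re = 0) :
    (b / a).re = 0 := by
  have hs : Complex.normSq a ≠ 0 := by simpa [Complex.normSq_eq_zero] using ha
  rw [Complex.div_re]
  simp only [Complex.mul_re, Complex.conj_re, Complex.conj_im] at hre
  field_simp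
  linarith

lemma exists_third {k : ℕ} (hk : 3 ≤ k) (i j : Fin k) : ∃ l : Fin k, l ≠ i ∧ l ≠ j := by
  have hcard : 0 < ({i, j}ᶜ : Finset (Fin k)).card := by
    rw [Finset.card_compl]
    have h2 : ({i, j} : Finset (Fin k)).card ≤ 2 :=
      le_trans (Finset.card_insert_le _ _) (by simp)
    have : Fintype.card (Fin k) = k := by simp
    omega
  obtain ⟨l, hl⟩ := Finset.card_pos.1 hcard
  simp only [Finset.mem_compl, Finset.mem_insert, Finset.mem_singleton, not_or] at hl
  exact ⟨l, hl.1, hl.2⟩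

lemma strongBJ_of_coord {k : ℕ} (x y : Fin k → ℂ) (i : Fin k)
    (hy : y i = 0) (hx : ∀ m, ‖x m‖ ≤ ‖x i‖) : StrongBJ x y := by
  intro c
  have h1 : ‖x‖ ≤ ‖x i‖ := (pi_norm_le_iff_of_nonneg (norm_nonneg _)).2 hx
  have h2 : ‖(x + y * c) i‖ ≤ ‖x + y * c‖ := norm_le_pi_norm _ i
  have h3 : (x + y * c) i = x i := by simp [hy]
  calc ‖x‖ ≤ ‖x i‖ := h1
    _ ≤ ‖x + y * c‖ := by rw [← h3]; exact h2

lemma strongBJ_update {k : ℕ} (x y : Fin k → ℂ) (j : Fin k)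
    (hy : y j ≠ 0) (h : StrongBJ x y) : ‖x‖ ≤ ‖Function.update x j 0‖ := by
  have hh := h (fun m => if m = j then -(x j) / (y j) else 0)
  have he : x + y * (fun m => if m = j then -(x j) / (y j) else 0) = Function.update x j 0 := by
    funext m
    by_cases hm : m = j
    · subst hm
      simp [Function.update_self]
      field_simp
      ring
    · simp [Function.update_of_ne hm, hm]
  rwa [he] at hh

theorem stmt11 {k : ℕ} (hk : 3 ≤ k) (φ : Fin k → ℂ → ℂ)
    (Φ : (Fin k → ℂ) → (Fin k → ℂ)) (hΦ : ∀ x i, Φ x i = φ i (x i))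
    (hadd : ∀ x y, Φ (x + y) = Φ x + Φ y) (hsurj : Function.Surjective Φ)
    (hpres : ∀ a b : Fin k → ℂ, MutualBJ a b → MutualBJ (Φ a) (Φ b)) :
    ∃ (γ : ℝ) (u : Fin k → ℂ) (J : Finset (Fin k)),
      0 < γ ∧ (∀ i, ‖u i‖ = 1) ∧
      ∀ i z, φ i z = if i ∈ J then γ * u i * z else γ * u i * (starRingEnd ℂ) z := by
  have hφadd : ∀ i (x y : ℂ), φ i (x + y) = φ i x + φ i y := by
    intro i x y
    have h := congrFun (hadd (fun _ => x) (fun _ => y)) i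
    simpa [hΦ] using h
  have hφ0 : ∀ i, φ i 0 = 0 := by
    intro i
    have := hφadd i 0 0
    simp at this
    exact this
  have hφsurj : ∀ i (w : ℂ), ∃ z, φ i z = w := by
    intro i w
    obtain ⟨x, hx⟩ := hsurj (fun _ => w)
    exact ⟨x i, by rw [← hΦ x i, hx]⟩
  -- the key inequality
  have key1 : ∀ i j : Fin k, i ≠ j → ∀ lam mu : ℂ, ‖lam‖ ≤ ‖mu‖ → ‖φ j lam‖ ≤ ‖φ i mu‖ := by
    intro i j hij lam mu hle
    obtain ⟨l, hli, hlj⟩ : ∃ l : Fin k, l ≠ i ∧ l ≠ j := exists_third hk i j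
    obtain ⟨ν, hν⟩ := hφsurj j 1
    have hν0 : φ j ν ≠ 0 := by rw [hν]; exact one_ne_zero
    set a : Fin k → ℂ := fun m => if m = i then mu else if m = j then lam else 0 with ha
    set b : Fin k → ℂ := fun m => if m = j then ν else if m = l then ν else 0 with hb
    have hab : MutualBJ a b := by
      constructor
      · apply strongBJ_of_coord a b i
        · simp [hb, hij, Ne.symm hli]
        · intro m
          by_cases h1 : m = i
          · subst h1; exact le_rfl
          · by_cases h2 : m = j
            · subst h2; simpa [ha, h1, hij] using hle
            · simp [ha, h1, h2, hij]
      · apply strongBJ_of_coord b a l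
        · simp [ha, hli, hlj]
        · intro m
          by_cases h1 : m = j
          · subst h1; simp [hb, hlj]
          · by_cases h2 : m = l
            · subst h2; exact le_rfl
            · simp [hb, h1, h2, hlj]
    obtain ⟨hab1, hab2⟩ := hpres a b hab
    have hbj : (Φ b) j ≠ 0 := by rw [hΦ]; simpa [hb] using hν0
    have hup := strongBJ_update (Φ a) (Φ b) j hbj hab1
    have hupper : ‖Function.update (Φ a) j 0‖ ≤ ‖φ i mu‖ := by
      apply (pi_norm_le_iff_of_nonneg (norm_nonneg _)).2
      intro m
      by_cases h1 : m = j
      · subst h1; simp [Function.update_self]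
      · rw [Function.update_of_ne h1, hΦ]
        by_cases h2 : m = i
        · subst h2; simp [ha, h1]
        · simp [ha, h1, h2, hφ0]
    have hlower : ‖φ j lam‖ ≤ ‖Φ a‖ := by
      have h2 := norm_le_pi_norm (Φ a) j
      have h3 : Φ a j = φ j lam := by rw [hΦ]; simp [ha, Ne.symm hij]
      rwa [h3] at h2
    exact hlower.trans (hup.trans hupper)
  set F : Fin k → (ℂ →+ ℂ) := fun i => AddMonoidHom.mk' (φ i) (hφadd i) with hF
  have hFa : ∀ i z, F i z = φ i z := fun i z => rfl
  have key : ∀ i j : Fin k, ∀ lam mu : ℂ, ‖lam‖ ≤ ‖mu‖ → ‖φ j lam‖ ≤ ‖φ i mu‖ := by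
    intro i j lam mu h
    obtain ⟨l, hli, hlj⟩ := exists_third hk i j
    exact (key1 l j hlj lam lam le_rfl).trans (key1 i l (Ne.symm hli) lam mu h)
  have heq : ∀ i j : Fin k, ∀ lam mu : ℂ, ‖lam‖ = ‖mu‖ → ‖φ i lam‖ = ‖φ j mu‖ := fun i j lam mu h =>
    le_antisymm (key j i lam mu h.le) (key i j mu lam h.ge)
  have h0k : 0 < k := by omega
  set i₀ : Fin k := ⟨0, h0k⟩ with hi₀
  set γ : ℝ := ‖φ i₀ 1‖ with hγ
  have hrat : ∀ q : ℚ, ‖φ i₀ ((q:ℝ):ℂ)‖ = |(q:ℝ)| * γ := by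
    intro q
    have h1 : φ i₀ ((q:ℝ):ℂ) = (q:ℂ) * φ i₀ 1 := by
      have h := map_rat_smul (F i₀) q (1:ℂ)
      rw [hFa, hFa, Rat.smul_def, Rat.smul_def, mul_one] at h
      rw [show (((q:ℝ)):ℂ) = ((q:ℚ):ℂ) by push_cast; ring]
      exact h
    rw [h1, norm_mul]
    congr 1
    exact_mod_cast Complex.norm_ratCast q
  have hnorm : ∀ i (z : ℂ), ‖φ i z‖ = γ * ‖z‖ := by
    intro i z
    have h1 : ‖φ i z‖ = ‖φ i₀ ((‖z‖:ℝ):ℂ)‖ := by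
      apply heq
      simp [abs_of_nonneg (norm_nonneg z)]
    rw [h1]
    apply squeeze_rat _ _ _ (norm_nonneg _) (norm_nonneg _) (norm_nonneg _)
    · intro q hq
      have h2 : ‖φ i₀ ((‖z‖:ℝ):ℂ)‖ ≤ ‖φ i₀ ((q:ℝ):ℂ)‖ := by
        apply key
        simp only [Complex.norm_real, Real.norm_eq_abs]
        rw [abs_of_nonneg (norm_nonneg z)]
        exact hq.trans (le_abs_self _)
      rw [hrat] at h2
      rwa [abs_of_nonneg ((norm_nonneg z).trans hq), mul_comm] at h2
    · intro q hq0 hqr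
      have h2 : ‖φ i₀ ((q:ℝ):ℂ)‖ ≤ ‖φ i₀ ((‖z‖:ℝ):ℂ)‖ := by
        apply key
        simp only [Complex.norm_real, Real.norm_eq_abs]
        rw [abs_of_nonneg (norm_nonneg z), abs_of_nonneg hq0]
        exact hqr
      rw [hrat, abs_of_nonneg hq0, mul_comm] at h2
      exact h2
  have hγ0 : 0 ≤ γ := norm_nonneg _
  have hγpos : 0 < γ := by
    obtain ⟨x, hx⟩ := hφsurj i₀ 1
    have h1 := hnorm i₀ x
    rw [hx] at h1
    simp at h1
    rcases hγ0.lt_or_eq with h|h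
    · exact h
    · rw [← h] at h1; simp at h1
  have hreal : ∀ i (r : ℝ) (z : ℂ), φ i ((r:ℂ) * z) = (r:ℂ) * φ i z := by
    intro i r z
    have hq : ∀ q : ℚ, φ i (((q:ℝ):ℂ) * z) = ((q:ℝ):ℂ) * φ i z := by
      intro q
      have := map_rat_smul (F i) q z
      rw [hFa, hFa, Rat.smul_def, Rat.smul_def] at this
      simpa using this
    have hb : ∀ q : ℚ, ‖φ i ((r:ℂ) * z) - (r:ℂ) * φ i z‖ ≤ (γ * ‖z‖ + γ * ‖z‖) * |r - (q:ℝ)| := by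
      intro q
      have e1 : φ i ((r:ℂ) * z) - (r:ℂ) * φ i z
          = (φ i ((r:ℂ) * z) - φ i (((q:ℝ):ℂ) * z)) + (((q:ℝ):ℂ) - (r:ℂ)) * φ i z := by
        rw [hq]; ring
      rw [e1]
      have e2 : φ i ((r:ℂ) * z) - φ i (((q:ℝ):ℂ) * z) = φ i ((((r - (q:ℝ)):ℝ):ℂ) * z) := by
        have := map_sub (F i) ((r:ℂ) * z) (((q:ℝ):ℂ) * z)
        rw [hFa, hFa, hFa] at this
        rw [← this]
        push_cast
        ring_nf
      calc ‖_ + _‖ ≤ ‖φ i ((r:ℂ) * z) - φ i (((q:ℝ):ℂ) * z)‖ + ‖(((q:ℝ):ℂ) - (r:ℂ)) * φ i z‖ :=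
            norm_add_le _ _
        _ ≤ (γ * ‖z‖ + γ * ‖z‖) * |r - (q:ℝ)| := by
            rw [e2, hnorm, norm_mul, norm_mul, hnorm]
            have e3 : ‖((r - (q:ℝ) : ℝ):ℂ)‖ = |r - (q:ℝ)| := by
              rw [Complex.norm_real, Real.norm_eq_abs]
            have e4 : ‖((q:ℝ):ℂ) - (r:ℂ)‖ = |r - (q:ℝ)| := by
              rw [show ((q:ℝ):ℂ) - (r:ℂ) = (((q:ℝ) - r : ℝ):ℂ) by push_cast; ring]
              rw [Complex.norm_real, Real.norm_eq_abs, abs_sub_comm]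
            rw [e3, e4]
            ring_nf
            nlinarith [abs_nonneg (r - (q:ℝ)), norm_nonneg z, mul_nonneg hγ0 (norm_nonneg z)]
    have hz : ‖φ i ((r:ℂ) * z) - (r:ℂ) * φ i z‖ ≤ 0 := by
      apply le_of_forall_pos_le_add
      intro ε hε
      have hC0 : 0 ≤ γ * ‖z‖ + γ * ‖z‖ := by positivity
      have hC1 : (0:ℝ) < γ * ‖z‖ + γ * ‖z‖ + 1 := by linarith
      obtain ⟨q, hq1, hq2⟩ := exists_rat_btwn
        (show r < r + ε / (γ * ‖z‖ + γ * ‖z‖ + 1) by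
          have : 0 < ε / (γ * ‖z‖ + γ * ‖z‖ + 1) := div_pos hε hC1
          linarith)
      have h5 := hb q
      have h6 : |r - (q:ℝ)| < ε / (γ * ‖z‖ + γ * ‖z‖ + 1) := by
        rw [abs_sub_comm, abs_of_pos (by linarith)]
        linarith
      have h7 : (γ * ‖z‖ + γ * ‖z‖) * |r - (q:ℝ)|
          ≤ (γ * ‖z‖ + γ * ‖z‖) * (ε / (γ * ‖z‖ + γ * ‖z‖ + 1)) :=
        mul_le_mul_of_nonneg_left h6.le hC0
      have h8 : (γ * ‖z‖ + γ * ‖z‖) * (ε / (γ * ‖z‖ + γ * ‖z‖ + 1)) ≤ ε := by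
        have hd : (γ * ‖z‖ + γ * ‖z‖) / (γ * ‖z‖ + γ * ‖z‖ + 1) ≤ 1 :=
          div_le_one_of_le₀ (by linarith) hC1.le
        calc (γ * ‖z‖ + γ * ‖z‖) * (ε / (γ * ‖z‖ + γ * ‖z‖ + 1))
            = ε * ((γ * ‖z‖ + γ * ‖z‖) / (γ * ‖z‖ + γ * ‖z‖ + 1)) := by ring
          _ ≤ ε * 1 := mul_le_mul_of_nonneg_left hd hε.le
          _ = ε := by ring
      linarith
    have hzz := norm_le_zero_iff.1 hz
    exact sub_eq_zero.1 hzz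
  classical
  have hstruct : ∀ i, (∀ z, φ i z = z * φ i 1) ∨ (∀ z, φ i z = (starRingEnd ℂ) z * φ i 1) := by
    intro i
    have h1 : ‖φ i 1‖ = γ := by simpa using hnorm i 1
    have hI : ‖φ i Complex.I‖ = γ := by simpa using hnorm i Complex.I
    have ha : φ i 1 ≠ 0 := by
      intro h
      rw [h, norm_zero] at h1
      exact absurd h1.symm (ne_of_gt hγpos)
    have h1I : Complex.normSq (φ i (1 + Complex.I)) = 2 * γ^2 := by
      have e1 : ‖φ i (1 + Complex.I)‖ = γ * ‖(1 + Complex.I : ℂ)‖ := hnorm i _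
      have e2 : Complex.normSq (1 + Complex.I : ℂ) = 2 := by
        simp [Complex.normSq_apply]
        norm_num
      rw [Complex.normSq_eq_norm_sq, e1, mul_pow,
        Complex.sq_norm (1 + Complex.I), e2]
      ring
    have hre : (φ i 1 * (starRingEnd ℂ) (φ i Complex.I)).re = 0 := by
      have e := Complex.normSq_add (φ i 1) (φ i Complex.I)
      rw [← hφadd, h1I] at e
      have e1 : Complex.normSq (φ i 1) = γ^2 := by
        rw [Complex.normSq_eq_norm_sq, h1]
      have e2 : Complex.normSq (φ i Complex.I) = γ^2 := by
        rw [Complex.normSq_eq_norm_sq, hI]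
      rw [e1, e2] at e
      linarith
    have hwre : (φ i Complex.I / φ i 1).re = 0 := perp_char _ _ ha hre
    have hwabs : ‖φ i Complex.I / φ i 1‖ = 1 := by
      rw [norm_div, hI, h1,
        div_self (ne_of_gt hγpos)]
    have hzdec : ∀ z : ℂ, z = (z.re:ℂ) * 1 + (z.im:ℂ) * Complex.I := by
      intro z
      rw [mul_one]
      exact (Complex.re_add_im z).symm
    rcases wchar _ hwabs hwre with hw | hw
    · left
      have hφI : φ i Complex.I = Complex.I * φ i 1 := (div_eq_iff ha).1 hw
      intro z
      calc φ i z = φ i ((z.re:ℂ) * 1 + (z.im:ℂ) * Complex.I) := by rw [← hzdec]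
        _ = φ i ((z.re:ℂ) * 1) + φ i ((z.im:ℂ) * Complex.I) := hφadd i _ _
        _ = (z.re:ℂ) * φ i 1 + (z.im:ℂ) * φ i Complex.I := by rw [hreal, hreal]
        _ = ((z.re:ℂ) + (z.im:ℂ) * Complex.I) * φ i 1 := by rw [hφI]; ring
        _ = z * φ i 1 := by rw [Complex.re_add_im]
    · right
      have hφI : φ i Complex.I = -Complex.I * φ i 1 := by
        rw [(div_eq_iff ha).1 hw]
      intro z
      have hconj : (starRingEnd ℂ) z = (z.re:ℂ) - (z.im:ℂ) * Complex.I := by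
        apply Complex.ext <;> simp
      calc φ i z = φ i ((z.re:ℂ) * 1 + (z.im:ℂ) * Complex.I) := by rw [← hzdec]
        _ = φ i ((z.re:ℂ) * 1) + φ i ((z.im:ℂ) * Complex.I) := hφadd i _ _
        _ = (z.re:ℂ) * φ i 1 + (z.im:ℂ) * φ i Complex.I := by rw [hreal, hreal]
        _ = ((z.re:ℂ) - (z.im:ℂ) * Complex.I) * φ i 1 := by rw [hφI]; ring
        _ = (starRingEnd ℂ) z * φ i 1 := by rw [← hconj]
  refine ⟨γ, fun i => φ i 1 / (γ:ℂ),
    Finset.univ.filter (fun i => ∀ z, φ i z = z * φ i 1), hγpos, ?_, ?_⟩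
  · intro i
    have h1 : ‖φ i 1‖ = γ := by
      simpa using hnorm i 1
    rw [norm_div, h1, Complex.norm_real, Real.norm_eq_abs, abs_of_pos hγpos, div_self (ne_of_gt hγpos)]
  · intro i z
    have hγne : ((γ:ℝ):ℂ) ≠ 0 := Complex.ofReal_ne_zero.2 (ne_of_gt hγpos)
    have hcan : ((γ:ℝ):ℂ) * (φ i 1 / ((γ:ℝ):ℂ)) = φ i 1 := by field_simp
    by_cases hmem : i ∈ Finset.univ.filter (fun i => ∀ z, φ i z = z * φ i 1)
    · rw [if_pos hmem]
      have hp := (Finset.mem_filter.1 hmem).2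
      rw [hp z, hcan, mul_comm]
    · rw [if_neg hmem]
      have hp : ∀ w, φ i w = (starRingEnd ℂ) w * φ i 1 := by
        rcases hstruct i with h|h
        · exact absurd (Finset.mem_filter.2 ⟨Finset.mem_univ i, h⟩) hmem
        · exact h
      rw [hp z, hcan, mul_comm]
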